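/- Let (M, τ) be a von Neumann algebra with faithful normal trace state, B a unital *-subalgebra, X = X* ∈ M, and p ∈ M a projection commuting with B such that X is algebraically free from B[p]. Let α = τ(p), X_p = α⁻¹pXp, and define ψ : pMp → M by ψ(pmp) = α⁻¹pmp. Then ψ maps Bp⟨X_p⟩ into B⟨p, X⟩ and (ψ ⊗ ψ) ∘ ∂_{X_p:Bp} = ∂_{X:B[p]} ∘ ψ on Bp⟨X_p⟩. -/
import Mathlib


open TensorProduct

/-- The coalgebra morphism associated to free compression (Lemma 3.1): let `(M, τ)` be a
von Neumann algebra with faithful normal trace state, `B ⊆ M` a unital *-subalgebra,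
`X = X* ∈ M`, and `p ∈ M` a nonzero projection commuting with `B`, with `X` algebraically
free from `B[p]`.  Put `α = τ(p)`, `X_p = α⁻¹ p X p`, and let `ψ : pMp → M` be
`ψ(pmp) = α⁻¹ pmp`.  Let `∂₁ = ∂_{X_p : Bp}` be the free difference quotient on
`Bp⟨X_p⟩ ⊆ pMp` (the derivation killing `Bp` with `∂₁ X_p = p ⊗ p`) and `∂₂ = ∂_{X : B[p]}`
the free difference quotient on `B⟨p, X⟩ ⊆ M`.  Then `ψ` maps `Bp⟨X_p⟩` into `B⟨p, X⟩` and
`(ψ ⊗ ψ) ∘ ∂₁ = ∂₂ ∘ ψ` on `Bp⟨X_p⟩`. -/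
theorem coalgebraMorphism_free_compression
    {M : Type*} [Ring M] [Algebra ℂ M] [StarRing M] [StarModule ℂ M]
    (τ : M →ₗ[ℂ] ℂ)
    (htrace1 : τ 1 = 1)
    (htracial : ∀ a b : M, τ (a * b) = τ (b * a))
    (hstar : ∀ a : M, τ (star a) = starRingEnd ℂ (τ a))
    (hpos : ∀ a : M, 0 ≤ (τ (star a * a)).re ∧ (τ (star a * a)).im = 0)
    (hfaithful : ∀ a : M, τ (star a * a) = 0 → a = 0)
    (B : Subalgebra ℂ M) (hBstar : ∀ b ∈ B, star b ∈ B)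
    (X : M) (hX : IsSelfAdjoint X)
    (p : M) (hproj : p * p = p ∧ star p = p) (hp0 : p ≠ 0)
    (hcomm : ∀ b ∈ B, b * p = p * b)
    -- `α = τ(p)` and `X_p = α⁻¹ p X p`
    (α : ℂ) (hα : α = τ p)
    (Xp : M) (hXp : Xp = α⁻¹ • (p * X * p))
    -- `Bp⟨X_p⟩`, the polynomials in `X_p` with coefficients in `Bp` (a nonunital
    -- subalgebra of `M` contained in the corner `pMp`, with unit `p`)
    (A₁ : NonUnitalSubalgebra ℂ M)
    (hA₁ : A₁ = NonUnitalAlgebra.adjoin ℂ ({x | ∃ b ∈ B, x = b * p} ∪ {Xp}))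
    -- `B⟨p, X⟩`, the subalgebra of `M` generated by `B`, `p` and `X`
    (A₂ : Subalgebra ℂ M)
    (hA₂ : A₂ = Algebra.adjoin ℂ ((B : Set M) ∪ {p, X}))
    -- the free difference quotient `∂_{X_p : Bp}` on `Bp⟨X_p⟩`
    (D₁ : M →ₗ[ℂ] M ⊗[ℂ] M)
    (hD₁der : ∀ x ∈ A₁, ∀ y ∈ A₁, D₁ (x * y) =
      LinearMap.rTensor M (LinearMap.mulLeft ℂ x) (D₁ y) +
      LinearMap.lTensor M (LinearMap.mulRight ℂ y) (D₁ x))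
    (hD₁B : ∀ b ∈ B, D₁ (b * p) = 0)
    (hD₁X : D₁ Xp = p ⊗ₜ[ℂ] p)
    -- the free difference quotient `∂_{X : B[p]}` on `B⟨p, X⟩`
    (D₂ : M →ₗ[ℂ] M ⊗[ℂ] M)
    (hD₂der : ∀ x ∈ A₂, ∀ y ∈ A₂, D₂ (x * y) =
      LinearMap.rTensor M (LinearMap.mulLeft ℂ x) (D₂ y) +
      LinearMap.lTensor M (LinearMap.mulRight ℂ y) (D₂ x))
    (hD₂B : ∀ b ∈ B, D₂ b = 0)
    (hD₂p : D₂ p = 0)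
    (hD₂X : D₂ X = (1 : M) ⊗ₜ[ℂ] (1 : M)) :
    -- `ψ` maps `Bp⟨X_p⟩` into `B⟨p, X⟩`, and `(ψ ⊗ ψ) ∘ ∂_{X_p:Bp} = ∂_{X:B[p]} ∘ ψ`
    (∀ x ∈ A₁, α⁻¹ • x ∈ A₂) ∧
    (∀ x ∈ A₁, (α⁻¹ * α⁻¹) • D₁ x = D₂ (α⁻¹ • x)) := by
  subst hA₁ hA₂ hXp
  set A₂ : Subalgebra ℂ M := Algebra.adjoin ℂ ((B : Set M) ∪ {p, X}) with hA₂
  have hpA : p ∈ A₂ := Algebra.subset_adjoin (Or.inr (by simp))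
  have hXA : X ∈ A₂ := Algebra.subset_adjoin (Or.inr (by simp))
  have hBA : ∀ b ∈ B, b ∈ A₂ := fun b hb => Algebra.subset_adjoin (Or.inl hb)
  have hpX : p * X ∈ A₂ := mul_mem hpA hXA
  have hD₂pX : D₂ (p * X) = p ⊗ₜ[ℂ] 1 := by
    rw [hD₂der p hpA X hXA, hD₂p, hD₂X]
    simp
  have hD₂pXp : D₂ (p * X * p) = p ⊗ₜ[ℂ] p := by
    rw [hD₂der (p * X) hpX p hpA, hD₂p, hD₂pX]
    simp [(hproj.1 : p * p = p)]
  have key : ∀ x ∈ NonUnitalAlgebra.adjoin ℂ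
      ({x | ∃ b ∈ B, x = b * p} ∪ {α⁻¹ • (p * X * p)}),
      x ∈ A₂ ∧ α⁻¹ • D₁ x = D₂ x := by
    intro x hx
    induction hx using NonUnitalAlgebra.adjoin_induction with
    | mem x hx =>
      rcases hx with ⟨b, hb, rfl⟩ | hx
      · refine ⟨mul_mem (hBA b hb) hpA, ?_⟩
        rw [hD₁B b hb, hD₂der b (hBA b hb) p hpA, hD₂p, hD₂B b hb]
        simp
      · rcases hx with rfl
        refine ⟨SMulMemClass.smul_mem _ (mul_mem hpX hpA), ?_⟩
        rw [hD₁X, map_smul, hD₂pXp]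
    | add x y hx hy ihx ihy =>
      refine ⟨add_mem ihx.1 ihy.1, ?_⟩
      rw [map_add, map_add, smul_add, ihx.2, ihy.2]
    | zero => exact ⟨zero_mem _, by simp⟩
    | mul x y hx hy ihx ihy =>
      refine ⟨mul_mem ihx.1 ihy.1, ?_⟩
      rw [hD₁der x hx y hy, hD₂der x ihx.1 y ihy.1]
      simp only [← ihx.2, ← ihy.2, map_smul, smul_add]
    | smul r x hx ihx =>
      refine ⟨SMulMemClass.smul_mem _ ihx.1, ?_⟩
      rw [map_smul, map_smul, smul_comm, ihx.2]
  refine ⟨fun x hx => SMulMemClass.smul_mem _ (key x hx).1, fun x hx => ?_⟩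
  rw [map_smul, ← (key x hx).2, mul_smul]
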